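/- Let Ω ⊂ ℂ be a bounded, open, simply connected domain, φ : 𝔻 → Ω a conformal mapping, and ρ a density on Ω. Let M(u) = e^{u²} − 1 and Φ(u) = u·log(u + e). Then for every measurable f : 𝔻 → ℝ with ‖f‖_{L^M(𝔻)} < ∞ and ‖J_φ·(ρ∘φ)‖_{L^Φ(𝔻)} < ∞ one has (∫_Ω |f(φ⁻¹(x))|² ρ(x) dx)^{1/2} ≤ √2 · ‖f‖_{L^M(𝔻)} · (‖J_φ·(ρ∘φ)‖_{L^Φ(𝔻)})^{1/2}, where J_φ(y)·(ρ∘φ)(y) = |φ'(y)|²·ρ(φ(y)). (This bounds the norm of the composition operator (φ⁻¹)* : L^M(𝔻) → L²(Ω,ρ).) -/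

import Mathlib

open MeasureTheory Metric Set
open scoped ENNReal NNReal Real

/-- The Luxemburg norm `‖g‖_{L^N(E)} = inf{λ > 0 : ∫_E N(|g|/λ) dx ≤ 1}`. -/
noncomputable def luxemburgNorm (N : ℝ → ℝ) (E : Set ℂ) (g : ℂ → ℝ) : ℝ :=
  sInf {l : ℝ | 0 < l ∧ ∫⁻ x in E, ENNReal.ofReal (N (|g x| / l)) ≤ 1}

/-- The Young function `M(u) = e^{u²} − 1`. -/
noncomputable def Mfun (u : ℝ) : ℝ := Real.exp (u ^ 2) - 1

/-- The Young function `Φ(u) = u·log(u + e)`. -/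
noncomputable def Phifun (u : ℝ) : ℝ := u * Real.log (u + Real.exp 1)

lemma myYoung (s v : ℝ) (hs : 0 ≤ s) (hv : 0 ≤ v) :
    s * v ≤ (Real.exp s - 1) + v * Real.log (v + Real.exp 1) := by
  have he1 : (1:ℝ) ≤ Real.exp 1 := by nlinarith [Real.exp_one_gt_d9]
  by_cases hv1 : v ≤ 1
  · have h1 : s + 1 ≤ Real.exp s := Real.add_one_le_exp s
    have h2 : 0 ≤ Real.log (v + Real.exp 1) := Real.log_nonneg (by linarith)
    nlinarith
  · push_neg at hv1
    have hvpos : (0:ℝ) < v := by linarith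
    have h1 : (s - Real.log v) + 1 ≤ Real.exp (s - Real.log v) := Real.add_one_le_exp _
    have h2 : Real.exp (s - Real.log v) = Real.exp s / v := by
      rw [Real.exp_sub, Real.exp_log hvpos]
    have h3 : Real.log v ≤ Real.log (v + Real.exp 1) :=
      Real.log_le_log hvpos (by linarith)
    rw [h2] at h1
    have h4 : v * ((s - Real.log v) + 1) ≤ Real.exp s := by
      have := mul_le_mul_of_nonneg_left h1 hvpos.le
      rwa [mul_div_cancel₀ _ (ne_of_gt hvpos)] at this
    nlinarith

lemma myDet (c : ℂ) :
    ContinuousLinearMap.det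
      (((1 : ℂ →L[ℂ] ℂ).smulRight c).restrictScalars ℝ) = Complex.normSq c := by
  have h : (((1 : ℂ →L[ℂ] ℂ).smulRight c).restrictScalars ℝ : ℂ →ₗ[ℝ] ℂ)
      = Algebra.lmul ℝ ℂ c := by
    ext z; simp [mul_comm]
  show LinearMap.det _ = _
  rw [h, ← Algebra.norm_apply, Algebra.norm_complex_apply]

/-- Norm bound for the composition operator
`(φ⁻¹)* : L^M(𝔻) → L²(Ω,ρ)`:
`‖f∘φ⁻¹‖_{L²(Ω,ρ)} ≤ √2 · ‖f‖_{L^M(𝔻)} · ‖J_φ·(ρ∘φ)‖_{L^Φ(𝔻)}^{1/2}`. -/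
theorem composition_operator_orlicz_to_weighted_L2
    (Ω : Set ℂ) (hΩopen : IsOpen Ω) (hΩbdd : Bornology.IsBounded Ω)
    (hΩsc : SimplyConnectedSpace Ω)
    (φ φinv : ℂ → ℂ)
    (hφdiff : DifferentiableOn ℂ φ (ball (0:ℂ) 1))
    (hφderiv : ∀ y ∈ ball (0:ℂ) 1, deriv φ y ≠ 0)
    (hφbij : Set.BijOn φ (ball (0:ℂ) 1) Ω)
    (hφinv : Set.InvOn φinv φ (ball (0:ℂ) 1) Ω)
    (ρ : ℂ → ℝ) (hρcont : ContinuousOn ρ Ω) (hρpos : ∀ x ∈ Ω, 0 < ρ x)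
    (hρint : IntegrableOn ρ Ω)
    (f : ℂ → ℝ) (hfm : Measurable f)
    (hfM : {l : ℝ | 0 < l ∧
      ∫⁻ y in ball (0:ℂ) 1, ENNReal.ofReal (Mfun (|f y| / l)) ≤ 1}.Nonempty)
    (hJρ : {l : ℝ | 0 < l ∧
      ∫⁻ y in ball (0:ℂ) 1,
        ENNReal.ofReal (Phifun (|‖deriv φ y‖ ^ 2 * ρ (φ y)| / l)) ≤ 1}.Nonempty) :
    (∫ x in Ω, (f (φinv x)) ^ 2 * ρ x) ^ ((1:ℝ)/2) ≤
      Real.sqrt 2 * luxemburgNorm Mfun (ball (0:ℂ) 1) f *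
        Real.sqrt (luxemburgNorm Phifun (ball (0:ℂ) 1)
          (fun y => ‖deriv φ y‖ ^ 2 * ρ (φ y))) := by
  set D : Set ℂ := ball (0:ℂ) 1 with hD
  set g : ℂ → ℝ := fun y => ‖deriv φ y‖ ^ 2 * ρ (φ y) with hg
  set F : ℂ → ℝ := fun x => (f (φinv x)) ^ 2 * ρ x with hF
  set SM := {l : ℝ | 0 < l ∧ ∫⁻ y in D, ENNReal.ofReal (Mfun (|f y| / l)) ≤ 1} with hSM
  set SP := {l : ℝ | 0 < l ∧ ∫⁻ y in D, ENNReal.ofReal (Phifun (|g y| / l)) ≤ 1} with hSP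
  have hDmeas : MeasurableSet D := measurableSet_ball
  set A := luxemburgNorm Mfun D f with hA
  set B := luxemburgNorm Phifun D g with hB
  have hAdef : A = sInf SM := rfl
  have hBdef : B = sInf SP := rfl
  have hA0 : 0 ≤ A := by
    rw [hAdef]; exact le_csInf hfM (fun l hl => hl.1.le)
  have hB0 : 0 ≤ B := by
    rw [hBdef]; exact le_csInf hJρ (fun l hl => hl.1.le)
  have hRHS0 : 0 ≤ Real.sqrt 2 * A * Real.sqrt B := by positivity
  by_cases hmeas : AEStronglyMeasurable F (volume.restrict Ω)
  swap
  · rw [show (∫ x in Ω, (f (φinv x)) ^ 2 * ρ x) = 0 from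
      integral_non_aestronglyMeasurable hmeas]
    rw [Real.zero_rpow (by norm_num)]
    exact hRHS0
  -- main case
  have hF0 : 0 ≤ᵐ[volume.restrict Ω] F := by
    filter_upwards [self_mem_ae_restrict hΩopen.measurableSet] with x hx
    exact mul_nonneg (sq_nonneg _) (hρpos x hx).le
  have hIeq : (∫ x in Ω, F x) = (∫⁻ x in Ω, ENNReal.ofReal (F x)).toReal :=
    integral_eq_lintegral_of_nonneg_ae hF0 hmeas
  -- change of variables
  have hderiv : ∀ y ∈ D, HasFDerivWithinAt φ
      (((1 : ℂ →L[ℂ] ℂ).smulRight (deriv φ y)).restrictScalars ℝ) D y := by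
    intro y hy
    have hdy : DifferentiableAt ℂ φ y :=
      (hφdiff y hy).differentiableAt (isOpen_ball.mem_nhds hy)
    exact (hdy.hasDerivAt.hasFDerivAt.restrictScalars ℝ).hasFDerivWithinAt
  have hcov : (∫⁻ x in Ω, ENNReal.ofReal (F x)) =
      ∫⁻ y in D, ENNReal.ofReal
        |ContinuousLinearMap.det
          (((1 : ℂ →L[ℂ] ℂ).smulRight (deriv φ y)).restrictScalars ℝ)| *
        ENNReal.ofReal (F (φ y)) := by
    rw [← hφbij.image_eq]
    exact lintegral_image_eq_lintegral_abs_det_fderiv_mul volume hDmeas hderiv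
      hφbij.injOn _
  have hcong : (∫⁻ y in D, ENNReal.ofReal
        |ContinuousLinearMap.det
          (((1 : ℂ →L[ℂ] ℂ).smulRight (deriv φ y)).restrictScalars ℝ)| *
        ENNReal.ofReal (F (φ y)))
      = ∫⁻ y in D, ENNReal.ofReal ((f y) ^ 2 * g y) := by
    refine setLIntegral_congr_fun hDmeas (fun y hy => ?_)
    rw [myDet]
    have hFy : F (φ y) = f y ^ 2 * ρ (φ y) := by
      simp only [hF]; rw [hφinv.1 hy]
    rw [hFy, ← ENNReal.ofReal_mul (abs_nonneg _)]
    congr 1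
    have hns : |(Complex.normSq (deriv φ y) : ℝ)| = ‖deriv φ y‖ ^ 2 := by
      rw [abs_of_nonneg (Complex.normSq_nonneg _), ← Complex.sq_norm]
    rw [hns]; simp only [hg]; ring
  -- core estimate
  have hkey : ∀ l ∈ SM, ∀ m ∈ SP, (∫ x in Ω, F x) ≤ 2 * l ^ 2 * m := by
    intro l hl m hm
    have hlpos : 0 < l := hl.1
    have hmpos : 0 < m := hm.1
    have hpt : ∀ y ∈ D, ENNReal.ofReal ((f y) ^ 2 * g y) ≤
        ENNReal.ofReal (l ^ 2 * m) *
          (ENNReal.ofReal (Mfun (|f y| / l)) + ENNReal.ofReal (Phifun (|g y| / m))) := by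
      intro y hy
      have hgy0 : 0 ≤ g y :=
        mul_nonneg (by positivity) (hρpos _ (hφbij.mapsTo hy)).le
      have habs : |g y| = g y := abs_of_nonneg hgy0
      have hMnn : 0 ≤ Mfun (|f y| / l) := by
        have : (1:ℝ) ≤ Real.exp ((|f y| / l) ^ 2) :=
          Real.one_le_exp (by positivity)
        simp only [Mfun]; linarith
      have hPnn : 0 ≤ Phifun (|g y| / m) := by
        have h1 : (1:ℝ) ≤ Real.exp 1 := by nlinarith [Real.exp_one_gt_d9]
        have : 0 ≤ Real.log (|g y| / m + Real.exp 1) :=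
          Real.log_nonneg (by linarith [div_nonneg (abs_nonneg (g y)) hmpos.le])
        simp only [Phifun]; exact mul_nonneg (div_nonneg (abs_nonneg _) hmpos.le) this
      have hyoung := myYoung ((f y) ^ 2 / l ^ 2) (g y / m) (by positivity)
        (by positivity)
      have hreal : (f y) ^ 2 * g y ≤
          l ^ 2 * m * (Mfun (|f y| / l) + Phifun (|g y| / m)) := by
        have hMeq : Mfun (|f y| / l) = Real.exp ((f y) ^ 2 / l ^ 2) - 1 := by
          simp only [Mfun]; rw [div_pow, sq_abs]
        have hPeq : Phifun (|g y| / m) =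
            (g y / m) * Real.log (g y / m + Real.exp 1) := by
          simp only [Phifun, habs]
        rw [hMeq, hPeq]
        have h2 := mul_le_mul_of_nonneg_left hyoung (by positivity :
          (0:ℝ) ≤ l ^ 2 * m)
        calc (f y) ^ 2 * g y
            = l ^ 2 * m * ((f y) ^ 2 / l ^ 2 * (g y / m)) := by
              field_simp
          _ ≤ _ := by
              refine le_trans h2 (le_of_eq ?_); ring
      calc ENNReal.ofReal ((f y) ^ 2 * g y)
          ≤ ENNReal.ofReal (l ^ 2 * m * (Mfun (|f y| / l) + Phifun (|g y| / m))) :=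
            ENNReal.ofReal_le_ofReal hreal
        _ = _ := by
            rw [ENNReal.ofReal_mul (by positivity), ENNReal.ofReal_add hMnn hPnn]
    have hMmeas : Measurable (fun y => ENNReal.ofReal (Mfun (|f y| / l))) := by
      apply Measurable.ennreal_ofReal
      simp only [Mfun]
      exact (((hfm.abs.div_const l).pow_const 2).exp).sub_const 1
    have hbound : (∫⁻ x in Ω, ENNReal.ofReal (F x)) ≤
        ENNReal.ofReal (2 * l ^ 2 * m) := by
      rw [hcov, hcong]
      calc (∫⁻ y in D, ENNReal.ofReal ((f y) ^ 2 * g y))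
          ≤ ∫⁻ y in D, ENNReal.ofReal (l ^ 2 * m) *
              (ENNReal.ofReal (Mfun (|f y| / l)) +
                ENNReal.ofReal (Phifun (|g y| / m))) :=
            setLIntegral_mono' hDmeas hpt
        _ = ENNReal.ofReal (l ^ 2 * m) *
              ((∫⁻ y in D, ENNReal.ofReal (Mfun (|f y| / l))) +
                ∫⁻ y in D, ENNReal.ofReal (Phifun (|g y| / m))) := by
            rw [lintegral_const_mul' _ _ ENNReal.ofReal_ne_top,
              lintegral_add_left hMmeas]
        _ ≤ ENNReal.ofReal (l ^ 2 * m) * (1 + 1) :=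
            mul_le_mul' le_rfl (add_le_add hl.2 hm.2)
        _ = ENNReal.ofReal (2 * l ^ 2 * m) := by
            rw [show (2 : ℝ) * l ^ 2 * m = 2 * (l ^ 2 * m) by ring,
              ENNReal.ofReal_mul (by norm_num : (0:ℝ) ≤ 2)]
            norm_num
            ring
    rw [hIeq]
    exact ENNReal.toReal_le_of_le_ofReal (by positivity) hbound
  have hI0 : 0 ≤ (∫ x in Ω, F x) := by rw [hIeq]; exact ENNReal.toReal_nonneg
  set I := ∫ x in Ω, F x with hI
  -- pass to infima
  have hIB : ∀ l ∈ SM, I ≤ 2 * l ^ 2 * B := by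
    intro l hl
    have hstep : I / (2 * l ^ 2) ≤ B := by
      rw [hBdef]
      refine le_csInf hJρ (fun m hm => ?_)
      rw [div_le_iff₀ (mul_pos two_pos (pow_pos hl.1 2))]
      calc I ≤ 2 * l ^ 2 * m := hkey l hl m hm
        _ = m * (2 * l ^ 2) := by ring
    have := (div_le_iff₀ (mul_pos two_pos (pow_pos hl.1 2))).1 hstep
    linarith [this]
  have hAB : I ≤ 2 * A ^ 2 * B := by
    rcases eq_or_lt_of_le hB0 with hBeq | hBpos
    · obtain ⟨l, hl⟩ := hfM
      have := hIB l hl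
      nlinarith [this, sq_nonneg l]
    · have hsq : ∀ l ∈ SM, Real.sqrt (I / (2 * B)) ≤ l := by
        intro l hl
        have h1 : I / (2 * B) ≤ l ^ 2 := by
          rw [div_le_iff₀ (by linarith : (0:ℝ) < 2 * B)]
          calc I ≤ 2 * l ^ 2 * B := hIB l hl
            _ = l ^ 2 * (2 * B) := by ring
        calc Real.sqrt (I / (2 * B)) ≤ Real.sqrt (l ^ 2) := Real.sqrt_le_sqrt h1
          _ = l := by rw [Real.sqrt_sq hl.1.le]
      have hsA : Real.sqrt (I / (2 * B)) ≤ A := by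
        rw [hAdef]; exact le_csInf hfM hsq
      have h2 : I / (2 * B) ≤ A ^ 2 := by
        have h3 : I / (2 * B) = (Real.sqrt (I / (2 * B))) ^ 2 :=
          (Real.sq_sqrt (div_nonneg hI0 (by linarith))).symm
        rw [h3]
        exact pow_le_pow_left₀ (Real.sqrt_nonneg _) hsA 2
      have := (div_le_iff₀ (by linarith : (0:ℝ) < 2 * B)).1 h2
      linarith
  -- conclude
  have hfinal : I ^ ((1:ℝ)/2) ≤ Real.sqrt 2 * A * Real.sqrt B := by
    rw [← Real.sqrt_eq_rpow]
    calc Real.sqrt I ≤ Real.sqrt (2 * A ^ 2 * B) := Real.sqrt_le_sqrt hAB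
      _ = Real.sqrt 2 * A * Real.sqrt B := by
          rw [Real.sqrt_mul (by positivity), Real.sqrt_mul (by norm_num : (0:ℝ) ≤ 2),
            Real.sqrt_sq hA0]
  exact hfinal
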